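/- Let n ≥ 2, 0 < λ ≤ Λ < ∞, α ∈ (0,1), C, C̃ > 0, ε > 0, and let N ∈ ℕ satisfy N ≥ 4√(Λ/λ) and N > 2^{7/2} Λ √(Λ/λ) C. Let f(x,z) = C|x−z|^α + C̃|x+z|² and suppose x, z ∈ B_r(0) satisfy (x−z)/|x−z| = e₁ and |x−z| > N√λ·ε. Then for every pair of vectors h_x, h_z ∈ ℝⁿ with |h_x|, |h_z| ≤ √Λ·ε, one has f(x+h_x, z+h_z) − f(x,z) ≤ Cα|x−z|^{α−1} e₁ᵀ(h_x−h_z) + 2C̃(x+z)ᵀ(h_x+h_z) + (C/2)·α|x−z|^{α−2}·trace{ J_α (h_x−h_z)(h_x−h_z)ᵀ } + (16 C̃ Λ r^{2−α} + 1)|x−z|^{α−2} ε². -/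

import Mathlib

open MeasureTheory Matrix

noncomputable section

abbrev EucSp (n : ℕ) := EuclideanSpace ℝ (Fin n)

/-- Principal square root of a positive semidefinite matrix (zero otherwise). -/
noncomputable def msqrt {n : ℕ} (A : Matrix (Fin n) (Fin n) ℝ) : Matrix (Fin n) (Fin n) ℝ :=
  open scoped Classical in
  if h : A.PosSemidef then
    (h.1.eigenvectorUnitary : Matrix (Fin n) (Fin n) ℝ) *
      Matrix.diagonal ((↑) ∘ (Real.sqrt ·) ∘ h.1.eigenvalues) *
      (star h.1.eigenvectorUnitary : Matrix (Fin n) (Fin n) ℝ)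
  else 0

/-- `A ∈ 𝒜(λ,Λ)`: symmetric and uniformly elliptic. -/
def UnifElliptic {n : ℕ} (lam Lam : ℝ) (A : Matrix (Fin n) (Fin n) ℝ) : Prop :=
  A.IsSymm ∧ ∀ ξ : Fin n → ℝ,
    lam * (ξ ⬝ᵥ ξ) ≤ ξ ⬝ᵥ A.mulVec ξ ∧ ξ ⬝ᵥ A.mulVec ξ ≤ Lam * (ξ ⬝ᵥ ξ)

/-- Membership in the orthogonal group `O(n)`. -/
def IsOrthMat {n : ℕ} (Q : Matrix (Fin n) (Fin n) ℝ) : Prop :=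
  Q * Qᵀ = 1 ∧ Qᵀ * Q = 1

/-- Matrix acting on Euclidean space. -/
noncomputable def mvE {n : ℕ} (M : Matrix (Fin n) (Fin n) ℝ) (y : EucSp n) : EucSp n :=
  (EuclideanSpace.equiv (Fin n) ℝ).symm (M.mulVec ((EuclideanSpace.equiv (Fin n) ℝ) y))

/-- The ellipsoid `x + ε A^{1/2} 𝔹`. -/
noncomputable def ellipsoid {n : ℕ} (ε : ℝ) (M : Matrix (Fin n) (Fin n) ℝ) (x : EucSp n) :
    Set (EucSp n) :=
  (fun y => x + ε • mvE (msqrt M) y) '' Metric.ball (0 : EucSp n) 1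

/-- The matrix `J_α = diag(α-1, 1, …, 1)`. -/
noncomputable def Jmat (n : ℕ) (α : ℝ) : Matrix (Fin n) (Fin n) ℝ :=
  Matrix.diagonal (fun i => if (i : ℕ) = 0 then α - 1 else 1)

/-- Reflection in the first coordinate axis. -/
noncomputable def J0 (n : ℕ) : Matrix (Fin n) (Fin n) ℝ :=
  Matrix.diagonal (fun i => if (i : ℕ) = 0 then -1 else 1)

/-- The first standard basis vector `e₁`. -/
noncomputable def e1 (n : ℕ) : EucSp n :=
  (EuclideanSpace.equiv (Fin n) ℝ).symm (fun i => if (i : ℕ) = 0 then 1 else 0)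

/-- `f₁(x,z) = C|x-z|^α + C̃|x+z|²`. -/
noncomputable def f1 {n : ℕ} (α C Ct : ℝ) (x z : EucSp n) : ℝ :=
  C * ‖x - z‖ ^ α + Ct * ‖x + z‖ ^ 2

/-- The annular step function `f₂`. -/
noncomputable def f2 {n : ℕ} (α C lam ε : ℝ) (N : ℕ) (x z : EucSp n) : ℝ :=
  if ‖x - z‖ / (Real.sqrt lam * ε) > (N : ℝ) then 0
  else C ^ (2 * (2 * N - ⌈2 * ‖x - z‖ / (Real.sqrt lam * ε)⌉₊)) * ε ^ α

/-! ### Auxiliary lemmas -/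

section AuxLemmas

open Real Set

lemma bern_neg' {q x : ℝ} (hq : 1 ≤ q) (hx : 0 < x) : 1 - q * (x - 1) ≤ x ^ (-q) := by
  have h1 : (-1 : ℝ) ≤ 1/x - 1 := by
    have : 0 < 1/x := by positivity
    linarith
  have h2 := one_add_mul_self_le_rpow_one_add h1 hq
  have h3 : (1 + (1/x - 1)) ^ q = x ^ (-q) := by
    rw [show 1 + (1/x - 1) = x⁻¹ by field_simp; ring, Real.inv_rpow hx.le, ← Real.rpow_neg hx.le]
  rw [h3] at h2
  refine le_trans ?_ h2
  have key : 0 ≤ (1 - x)^2 / x := by positivity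
  have h4 : (1/x - 1) + (x - 1) = (1-x)^2/x := by field_simp; ring
  nlinarith [mul_le_mul_of_nonneg_left key (le_of_lt (lt_of_lt_of_le zero_lt_one hq))]

private noncomputable def phiF (s : ℝ) : ℝ → ℝ :=
  fun x => x^(s-1) - 1 - (s-1)*(x-1) - (s-1)*(s-2)/2*(x-1)^2

private noncomputable def gF (s : ℝ) : ℝ → ℝ :=
  fun x => 1 + s*(x-1) + s*(s-1)/2*(x-1)^2 + s*(s-1)*(s-2)/6*(x-1)^3 - x^s

private lemma phiF_hasDeriv (s : ℝ) {y : ℝ} (hy : 0 < y) :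
    HasDerivAt (phiF s) ((s-1)*(y^(s-2) - 1 - (s-2)*(y-1))) y := by
  have h1 := Real.hasDerivAt_rpow_const (x := y) (p := s-1) (Or.inl hy.ne')
  have h2 : HasDerivAt (fun x : ℝ => (s-1)*(x-1)) (s-1) y := by
    simpa using ((hasDerivAt_id y).sub_const 1).const_mul (s-1)
  have h3 : HasDerivAt (fun x : ℝ => (s-1)*(s-2)/2*(x-1)^2)
      ((s-1)*(s-2)/2*(2*(y-1))) y := by
    simpa using (((hasDerivAt_id y).sub_const 1).pow 2).const_mul ((s-1)*(s-2)/2)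
  have := ((h1.sub_const 1).sub h2).sub h3
  refine this.congr_deriv ?_
  rw [show s - 1 - 1 = s - 2 by ring]
  ring

private lemma gF_hasDeriv {s : ℝ} {y : ℝ} (hy : 0 < y) :
    HasDerivAt (gF s) (-s * phiF s y) y := by
  have h1 := Real.hasDerivAt_rpow_const (x := y) (p := s) (Or.inl hy.ne')
  have h2 : HasDerivAt (fun x : ℝ => s*(x-1)) s y := by
    simpa using ((hasDerivAt_id y).sub_const 1).const_mul s
  have h3 : HasDerivAt (fun x : ℝ => s*(s-1)/2*(x-1)^2) (s*(s-1)/2*(2*(y-1))) y := by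
    simpa using (((hasDerivAt_id y).sub_const 1).pow 2).const_mul (s*(s-1)/2)
  have h4 : HasDerivAt (fun x : ℝ => s*(s-1)*(s-2)/6*(x-1)^3)
      (s*(s-1)*(s-2)/6*(3*(y-1)^2)) y := by
    simpa using (((hasDerivAt_id y).sub_const 1).pow 3).const_mul (s*(s-1)*(s-2)/6)
  have := (((h2.const_add 1).add h3).add h4).sub h1
  refine this.congr_deriv ?_
  unfold phiF
  ring

private lemma phiF_anti {s : ℝ} (hs1 : s < 1) : AntitoneOn (phiF s) (Ioi (0:ℝ)) := by
  apply antitoneOn_of_deriv_nonpos (convex_Ioi 0)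
  · intro y hy
    exact (phiF_hasDeriv s (hy : 0 < y)).continuousAt.continuousWithinAt
  · intro y hy
    rw [interior_Ioi] at hy
    exact (phiF_hasDeriv s hy).differentiableAt.differentiableWithinAt
  · intro y hy
    rw [interior_Ioi] at hy
    rw [(phiF_hasDeriv s hy).deriv]
    have hber := bern_neg' (q := 2 - s) (by linarith) hy
    rw [show -(2-s) = s-2 by ring] at hber
    have hbr : 0 ≤ y^(s-2) - 1 - (s-2)*(y-1) := by nlinarith
    nlinarith

private lemma phiF_one (s : ℝ) : phiF s 1 = 0 := by unfold phiF; simp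

private lemma phiF_nonpos {s : ℝ} (hs1 : s < 1) {x : ℝ} (hx : 1 ≤ x) :
    phiF s x ≤ 0 := by
  have := phiF_anti hs1 (mem_Ioi.2 one_pos) (mem_Ioi.2 (lt_of_lt_of_le one_pos hx)) hx
  rw [phiF_one] at this
  linarith

private lemma phiF_nonneg {s : ℝ} (hs1 : s < 1) {x : ℝ} (hx0 : 0 < x) (hx : x ≤ 1) :
    0 ≤ phiF s x := by
  have := phiF_anti hs1 (mem_Ioi.2 hx0) (mem_Ioi.2 one_pos) hx
  rw [phiF_one] at this
  linarith

/-- Third-order upper bound for `x ^ s`, `0 < s < 1`, `x > 0`. -/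
lemma cubic_rpow_le {s x : ℝ} (hs0 : 0 < s) (hs1 : s < 1) (hx : 0 < x) :
    x ^ s ≤ 1 + s*(x-1) + s*(s-1)/2*(x-1)^2 + s*(s-1)*(s-2)/6*(x-1)^3 := by
  have hg1 : gF s 1 = 0 := by unfold gF; simp
  have key : 0 ≤ gF s x := by
    rcases le_total x 1 with hle | hge
    · have hanti : AntitoneOn (gF s) (Icc x 1) := by
        apply antitoneOn_of_deriv_nonpos (convex_Icc x 1)
        · intro y hy
          have hy0 : 0 < y := lt_of_lt_of_le hx hy.1
          exact (gF_hasDeriv hy0).continuousAt.continuousWithinAt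
        · intro y hy
          rw [interior_Icc] at hy
          have hy0 : 0 < y := lt_of_lt_of_le hx hy.1.le
          exact (gF_hasDeriv hy0).differentiableAt.differentiableWithinAt
        · intro y hy
          rw [interior_Icc] at hy
          have hy0 : 0 < y := lt_of_lt_of_le hx hy.1.le
          rw [(gF_hasDeriv hy0).deriv]
          have := phiF_nonneg hs1 hy0 hy.2.le
          nlinarith
      have := hanti (left_mem_Icc.2 hle) (right_mem_Icc.2 hle) hle
      rw [hg1] at this
      linarith
    · have hmono : MonotoneOn (gF s) (Icc 1 x) := by
        apply monotoneOn_of_deriv_nonneg (convex_Icc 1 x)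
        · intro y hy
          have hy0 : 0 < y := lt_of_lt_of_le one_pos hy.1
          exact (gF_hasDeriv hy0).continuousAt.continuousWithinAt
        · intro y hy
          rw [interior_Icc] at hy
          have hy0 : 0 < y := lt_of_lt_of_le one_pos hy.1.le
          exact (gF_hasDeriv hy0).differentiableAt.differentiableWithinAt
        · intro y hy
          rw [interior_Icc] at hy
          have hy0 : 0 < y := lt_of_lt_of_le one_pos hy.1.le
          rw [(gF_hasDeriv hy0).deriv]
          have := phiF_nonpos hs1 hy.1.le
          nlinarith
      have := hmono (left_mem_Icc.2 hge) (right_mem_Icc.2 hge) hge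
      rw [hg1] at this
      linarith
  unfold gF at key
  linarith

lemma Bbound' {α : ℝ} (h0 : 0 ≤ α) (h1 : α ≤ 1) : α*(2-α)*(4-α) ≤ 25/8 := by
  nlinarith [sq_nonneg (α - 27/32), sq_nonneg α, sq_nonneg (1-α), mul_nonneg h0 (sub_nonneg.2 h1)]

set_option maxHeartbeats 1000000 in
lemma poly_ineq' {α a m t : ℝ} (hα0 : 0 < α) (hα1 : α < 1) (hm0 : 0 ≤ m) (hm : m ≤ 1/2)
    (ha1 : -m ≤ a) (ha2 : a ≤ m) (ht : t = 2*a + m^2) :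
    α/2*(α/2-1)/2 * t^2 + α/2*(α/2-1)*(α/2-2)/6 * t^3 ≤ α*(α-2)/2*a^2 + 5/4*m^3 := by
  have hA1 : α*(2-α) ≤ 1 := by nlinarith [sq_nonneg (1-α)]
  have hA0 : 0 ≤ α*(2-α) := by nlinarith
  have hB : α*(2-α)*(4-α) ≤ 25/8 := Bbound' hα0.le hα1.le
  have hB0 : 0 ≤ α*(2-α)*(4-α)/48 := by nlinarith
  have hm3 : 0 ≤ m^3 := by positivity
  have hid2 : α/2*(α/2-1)/2 * t^2 - α*(α-2)/2*a^2 = α*(2-α)/8 * (4*a^2 - t^2) := by ring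
  have hid3 : α/2*(α/2-1)*(α/2-2)/6 = α*(2-α)*(4-α)/48 := by ring
  rcases le_total 0 a with hc | hc
  · have ht0 : 0 ≤ t := by nlinarith
    have htm : t ≤ 5/2 * m := by nlinarith
    have ht3 : t^3 ≤ 125/8 * m^3 := by
      have := pow_le_pow_left₀ ht0 htm 3
      nlinarith [this]
    have h4a : 4*a^2 - t^2 ≤ 0 := by nlinarith
    have hfirst : α/2*(α/2-1)/2 * t^2 - α*(α-2)/2*a^2 ≤ 0 := by
      rw [hid2]; exact mul_nonpos_of_nonneg_of_nonpos (by nlinarith) h4a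
    have hsecond : α/2*(α/2-1)*(α/2-2)/6 * t^3 ≤ 5/4*m^3 := by
      rw [hid3]
      have h1 : α*(2-α)*(4-α)/48 * t^3 ≤ α*(2-α)*(4-α)/48 * (125/8*m^3) :=
        mul_le_mul_of_nonneg_left ht3 hB0
      have h2 : α*(2-α)*(4-α)/48 * (125/8*m^3) ≤ 25/384 * (125/8*m^3) := by
        apply mul_le_mul_of_nonneg_right (by linarith) (by positivity)
      linarith
    linarith
  · have h4 : 4*a^2 - t^2 ≤ 4*m^3 := by nlinarith [sq_nonneg m, sq_nonneg (m^2)]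
    have hfirst : α/2*(α/2-1)/2 * t^2 - α*(α-2)/2*a^2 ≤ 1/2 * m^3 := by
      rw [hid2]
      rcases le_total 0 (4*a^2 - t^2) with h | h
      · nlinarith
      · nlinarith
    have hsecond : α/2*(α/2-1)*(α/2-2)/6 * t^3 ≤ 3/4 * m^3 := by
      rw [hid3]
      rcases le_total t 0 with h | h
      · have ht3 : t^3 ≤ 0 := by nlinarith [sq_nonneg t]
        nlinarith
      · have htm2 : t ≤ m^2 := by nlinarith
        have ht3 : t^3 ≤ m^6 := by
          have := pow_le_pow_left₀ h htm2 3
          nlinarith [this]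
        have hcube : m^3 ≤ 1/8 := by nlinarith [pow_le_pow_left₀ hm0 hm 3]
        have hm6 : m^6 ≤ m^3/8 := by nlinarith [mul_le_mul_of_nonneg_right hcube hm3]
        nlinarith
    linarith

lemma core_scalar' {α a m : ℝ} (hα0 : 0 < α) (hα1 : α < 1) (hm0 : 0 ≤ m) (hm : m ≤ 1/2)
    (ha : |a| ≤ m) :
    (1 + 2*a + m^2) ^ (α/2) ≤ 1 + α*a + α/2*m^2 + α*(α-2)/2*a^2 + 5/4*m^3 := by
  have ha1 : -m ≤ a := neg_le_of_abs_le ha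
  have ha2 : a ≤ m := le_of_abs_le ha
  have hx : 0 < 1 + 2*a + m^2 := by nlinarith [sq_nonneg (1-m)]
  have hcv := cubic_rpow_le (s := α/2) (x := 1 + 2*a + m^2) (by linarith) (by linarith) hx
  have hpoly := poly_ineq' hα0 hα1 hm0 hm ha1 ha2 (t := 2*a + m^2) rfl
  have hexp : (1 + 2*a + m^2 - 1) = 2*a + m^2 := by ring
  rw [hexp] at hcv
  nlinarith [hcv, hpoly]

lemma aux_xpos {a m : ℝ} (h1 : -m ≤ a) (hm : m ≤ 1/2) : (0:ℝ) < 1 + 2*a + m^2 := by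
  nlinarith [sq_nonneg (1-m)]

lemma sum_e1_mul' {n : ℕ} (i0 : Fin n) (hi : (i0:ℕ) = 0) (v : EucSp n) :
    ∑ i, e1 n i * v i = v i0 := by
  have he : ∀ i : Fin n, e1 n i = if (i : ℕ) = 0 then 1 else 0 := fun i => rfl
  rw [Finset.sum_eq_single i0]
  · rw [he]; simp [hi]
  · intro b _ hb
    rw [he]
    have : (b : ℕ) ≠ 0 := fun hb0 => hb (Fin.ext (hb0.trans hi.symm))
    simp [this]
  · intro habs; exact absurd (Finset.mem_univ _) habs

lemma inner_eq_sum' {n : ℕ} (v w : EucSp n) :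
    (inner ℝ v w : ℝ) = ∑ i, v i * w i := by
  simp [PiLp.inner_apply, RCLike.inner_apply', mul_comm]

lemma trace_J' {n : ℕ} (α : ℝ) (i0 : Fin n) (hi : (i0:ℕ) = 0) (v : EucSp n) :
    Matrix.trace (Jmat n α * Matrix.vecMulVec (fun i => v i) (fun i => v i))
      = ‖v‖^2 + (α-2) * (v i0)^2 := by
  have h1 : Matrix.trace (Jmat n α * Matrix.vecMulVec (fun i => v i) (fun i => v i))
      = ∑ i : Fin n, (if (i:ℕ) = 0 then α-1 else 1) * (v i * v i) := by
    simp [Matrix.trace, Matrix.diag, Jmat, Matrix.diagonal_mul, Matrix.vecMulVec_apply,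
      mul_assoc]
  rw [h1]
  have h2 : ‖v‖^2 = ∑ i : Fin n, v i * v i := by
    rw [EuclideanSpace.real_norm_sq_eq]
    simp only [sq]
  rw [h2]
  have h3 : ∀ i : Fin n, (if (i:ℕ) = 0 then α-1 else 1) * (v i * v i)
      = v i * v i + (if (i:ℕ) = 0 then (α-2) * (v i)^2 else 0) := by
    intro i; by_cases hi' : (i:ℕ) = 0 <;> simp [hi'] <;> ring
  rw [Finset.sum_congr rfl (fun i _ => h3 i), Finset.sum_add_distrib]
  congr 1
  rw [Finset.sum_eq_single i0]
  · simp [hi]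
  · intro b _ hb
    have : (b:ℕ) ≠ 0 := fun hb0 => hb (Fin.ext (hb0.trans hi.symm))
    simp [this]
  · intro habs; exact absurd (Finset.mem_univ _) habs

lemma coord_le_norm' {n : ℕ} (v : EucSp n) (i : Fin n) : |v i| ≤ ‖v‖ := by
  have h1 : v i * v i ≤ ∑ j : Fin n, v j * v j := by
    simpa using Finset.single_le_sum (f := fun j => v j * v j)
      (fun j _ => mul_self_nonneg (v j)) (Finset.mem_univ i)
  have h2 : ‖v‖^2 = ∑ j : Fin n, v j * v j := by
    rw [EuclideanSpace.real_norm_sq_eq]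
    simp only [sq]
  have h3 : |v i|^2 ≤ ‖v‖^2 := by rw [sq_abs, h2]; nlinarith
  exact le_of_pow_le_pow_left₀ two_ne_zero (norm_nonneg v) h3

lemma ten_le_pow72 : (10:ℝ) ≤ 2^((7:ℝ)/2) := by
  have h1 : (2:ℝ)^((7:ℝ)/2) = Real.sqrt ((2:ℝ)^(7:ℕ)) := by
    rw [Real.sqrt_eq_rpow, ← Real.rpow_natCast 2 7, ← Real.rpow_mul (by norm_num)]
    norm_num
  rw [h1, show ((2:ℝ)^(7:ℕ)) = 128 by norm_num,
    show (10:ℝ) = Real.sqrt 100 by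
      rw [show (100:ℝ) = 10^2 by norm_num, Real.sqrt_sq (by norm_num)]]
  exact Real.sqrt_le_sqrt (by norm_num)

end AuxLemmas

set_option maxHeartbeats 1000000 in
/-- Taylor expansion estimate for the comparison function `f₁`
(Lemma 4.1). -/
theorem stmt2 {n : ℕ} (hn : 2 ≤ n)
    (lam Lam : ℝ) (hlam : 0 < lam) (hlL : lam ≤ Lam)
    (α : ℝ) (hα : α ∈ Set.Ioo (0 : ℝ) 1)
    (C Ct : ℝ) (hC : 0 < C) (hCt : 0 < Ct)
    (ε : ℝ) (hε : 0 < ε) (N : ℕ)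
    (hN1 : (N : ℝ) ≥ 4 * Real.sqrt (Lam / lam))
    (hN2 : (N : ℝ) > 2 ^ ((7 : ℝ) / 2) * Lam * Real.sqrt (Lam / lam) * C)
    (r : ℝ) (hr : 0 < r)
    (x z : EucSp n)
    (hx : x ∈ Metric.ball (0 : EucSp n) r) (hz : z ∈ Metric.ball (0 : EucSp n) r)
    (hxz : ‖x - z‖⁻¹ • (x - z) = e1 n)
    (hfar : ‖x - z‖ > (N : ℝ) * Real.sqrt lam * ε) :
    ∀ hx' hz' : EucSp n, ‖hx'‖ ≤ Real.sqrt Lam * ε → ‖hz'‖ ≤ Real.sqrt Lam * ε →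
      f1 α C Ct (x + hx') (z + hz') - f1 α C Ct x z ≤
        C * α * ‖x - z‖ ^ (α - 1) * (∑ i, e1 n i * (hx' - hz') i)
          + 2 * Ct * (∑ i, (x + z) i * (hx' + hz') i)
          + C / 2 * α * ‖x - z‖ ^ (α - 2) *
              Matrix.trace (Jmat n α *
                Matrix.vecMulVec (fun i => (hx' - hz') i) (fun i => (hx' - hz') i))
          + (16 * Ct * Lam * r ^ (2 - α) + 1) * ‖x - z‖ ^ (α - 2) * ε ^ 2 := by
  intro hx' hz' hhx hhz
  have hLam : 0 < Lam := lt_of_lt_of_le hlam hlL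
  have hsl : 0 < Real.sqrt lam := Real.sqrt_pos.2 hlam
  have hsL : 0 < Real.sqrt Lam := Real.sqrt_pos.2 hLam
  have hS1 : (1:ℝ) ≤ Real.sqrt (Lam/lam) := by
    rw [show (1:ℝ) = Real.sqrt 1 by simp]
    exact Real.sqrt_le_sqrt ((one_le_div hlam).2 hlL)
  have hsS : Real.sqrt (Lam/lam) * Real.sqrt lam = Real.sqrt Lam := by
    rw [← Real.sqrt_mul (by positivity) lam]
    congr 1
    field_simp
  set ρ := ‖x - z‖ with hρdef
  have hρ4 : 4 * (Real.sqrt Lam * ε) ≤ (N:ℝ) * Real.sqrt lam * ε := by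
    have h1 := mul_le_mul_of_nonneg_right hN1 (by positivity : (0:ℝ) ≤ Real.sqrt lam * ε)
    calc 4*(Real.sqrt Lam * ε) = 4*Real.sqrt (Lam/lam) * (Real.sqrt lam * ε) := by
          rw [← hsS]; ring
      _ ≤ (N:ℝ) * (Real.sqrt lam * ε) := h1
      _ = (N:ℝ) * Real.sqrt lam * ε := by ring
  have hN4 : (4:ℝ) ≤ (N:ℝ) := le_trans (by linarith only [hS1]) hN1
  have hρpos : 0 < ρ := by
    have h0 : (0:ℝ) < (N:ℝ) * Real.sqrt lam * ε := by
      have hN0 : (0:ℝ) < (N:ℝ) := by linarith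
      positivity
    linarith only [hfar, h0]
  set i0 : Fin n := (⟨0, by omega⟩ : Fin n) with hi0def
  set h := hx' - hz' with hhdef
  set k := hx' + hz' with hkdef
  have hhn : ‖h‖ ≤ 2*(Real.sqrt Lam * ε) := by
    calc ‖h‖ ≤ ‖hx'‖ + ‖hz'‖ := norm_sub_le _ _
      _ ≤ 2*(Real.sqrt Lam * ε) := by linarith
  have hkn : ‖k‖ ≤ 2*(Real.sqrt Lam * ε) := by
    calc ‖k‖ ≤ ‖hx'‖ + ‖hz'‖ := norm_add_le _ _
      _ ≤ 2*(Real.sqrt Lam * ε) := by linarith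
  have hw : x - z = ρ • e1 n := by
    rw [← hxz, smul_smul, mul_inv_cancel₀ hρpos.ne', one_smul]
  have hwi : (inner ℝ (x - z) h : ℝ) = ρ * h i0 := by
    rw [hw, real_inner_smul_left, inner_eq_sum', sum_e1_mul' i0 rfl]
  have hwh : ‖x - z + h‖^2 = ρ^2 * (1 + 2*(h i0/ρ) + (‖h‖/ρ)^2) := by
    rw [norm_add_sq_real, hwi, ← hρdef]
    field_simp
  have hm0 : (0:ℝ) ≤ ‖h‖/ρ := by positivity
  have hmhalf : ‖h‖/ρ ≤ 1/2 := by
    rw [div_le_iff₀ hρpos]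
    linarith only [hfar, hρ4, hhn]
  have ha : |h i0/ρ| ≤ ‖h‖/ρ := by
    rw [abs_div, abs_of_pos hρpos]
    gcongr
    exact coord_le_norm' h i0
  have hxpos : (0:ℝ) < 1 + 2*(h i0/ρ) + (‖h‖/ρ)^2 :=
    aux_xpos (neg_le_of_abs_le ha) hmhalf
  -- rpow expansion
  have hρ2 : ρ^((2:ℕ):ℝ) = ρ^(2:ℕ) := Real.rpow_natCast ρ 2
  have hwha : ‖x - z + h‖ ^ α = ρ^α * (1 + 2*(h i0/ρ) + (‖h‖/ρ)^2) ^ (α/2) := by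
    have h1 : ‖x - z + h‖ ^ α = ((‖x - z + h‖^(2:ℕ) : ℝ)) ^ (α/2) := by
      rw [← Real.rpow_natCast ‖x - z + h‖ 2, ← Real.rpow_mul (norm_nonneg _),
        show ((2:ℕ):ℝ) * (α/2) = α by push_cast; ring]
    rw [h1, hwh, Real.mul_rpow (by positivity) hxpos.le, ← Real.rpow_natCast ρ 2,
      ← Real.rpow_mul hρpos.le, show ((2:ℕ):ℝ) * (α/2) = α by push_cast; ring]
  have hcore := core_scalar' (a := h i0/ρ) (m := ‖h‖/ρ) hα.1 hα.2 hm0 hmhalf ha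
  -- power conversions
  have hρ1eq : ρ^(α-1) = ρ^α/ρ := by
    rw [Real.rpow_sub hρpos, Real.rpow_one]
  have hρ2eq : ρ^(α-2) = ρ^α/ρ^(2:ℕ) := by
    rw [Real.rpow_sub hρpos, show (2:ℝ) = ((2:ℕ):ℝ) by norm_num, hρ2]
  have e1' : ρ^α * (h i0/ρ) = ρ^(α-1) * h i0 := by
    rw [hρ1eq]; ring
  have e2' : ρ^α * (‖h‖/ρ)^2 = ρ^(α-2) * ‖h‖^2 := by
    rw [hρ2eq]; ring
  have e3' : ρ^α * (h i0/ρ)^2 = ρ^(α-2) * (h i0)^2 := by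
    rw [hρ2eq]; ring
  have e4' : ρ^α * (‖h‖/ρ)^3 = ρ^(α-2) * (‖h‖^3/ρ) := by
    rw [hρ2eq]; ring
  -- the ε² error bound
  have hh3 : ‖h‖^3 ≤ 8*(Lam*Real.sqrt Lam)*ε^3 := by
    have h1 := pow_le_pow_left₀ (norm_nonneg h) hhn 3
    have h2 : (2*(Real.sqrt Lam * ε))^3 = 8*(Real.sqrt Lam^2*Real.sqrt Lam)*ε^3 := by ring
    rw [h2, Real.sq_sqrt hLam.le] at h1
    exact h1
  have hNl : 10*(C*(Lam*Real.sqrt Lam)) ≤ (N:ℝ)*Real.sqrt lam := by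
    have h2 := mul_le_mul_of_nonneg_right hN2.le hsl.le
    have hrw : 2^((7:ℝ)/2)*Lam*Real.sqrt (Lam/lam)*C*Real.sqrt lam
        = 2^((7:ℝ)/2)*(C*(Lam*Real.sqrt Lam)) := by rw [← hsS]; ring
    rw [hrw] at h2
    have hpos : (0:ℝ) ≤ C*(Lam*Real.sqrt Lam) := by positivity
    have h11 : 10*(C*(Lam*Real.sqrt Lam)) ≤ 2^((7:ℝ)/2)*(C*(Lam*Real.sqrt Lam)) :=
      mul_le_mul_of_nonneg_right ten_le_pow72 hpos
    linarith
  have hchain : 5/4*C*‖h‖^3 ≤ ε^2*ρ := by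
    have c1 : 5/4*C*‖h‖^3 ≤ 5/4*C*(8*(Lam*Real.sqrt Lam)*ε^3) := by
      apply mul_le_mul_of_nonneg_left hh3 (by positivity)
    have c2 : 10*(C*(Lam*Real.sqrt Lam))*ε^3 ≤ ((N:ℝ)*Real.sqrt lam)*ε^3 :=
      mul_le_mul_of_nonneg_right hNl (by positivity)
    have c4 : ((N:ℝ)*Real.sqrt lam*ε)*ε^2 ≤ ρ*ε^2 :=
      mul_le_mul_of_nonneg_right hfar.le (by positivity)
    have c3 : ((N:ℝ)*Real.sqrt lam)*ε^3 = ((N:ℝ)*Real.sqrt lam*ε)*ε^2 := by ring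
    have c0 : 5/4*C*(8*(Lam*Real.sqrt Lam)*ε^3) = 10*(C*(Lam*Real.sqrt Lam))*ε^3 := by ring
    linarith only [c0, c1, c2, c3, c4]
  have heps : 5/4*C*(ρ^(α-2)*(‖h‖^3/ρ)) ≤ ρ^(α-2)*ε^2 := by
    have hnn : (0:ℝ) ≤ ρ^(α-2) := Real.rpow_nonneg hρpos.le _
    have hin : 5/4*C*(‖h‖^3/ρ) ≤ ε^2 := by
      rw [show 5/4*C*(‖h‖^3/ρ) = (5/4*C*‖h‖^3)/ρ by ring, div_le_iff₀ hρpos]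
      linarith only [hchain]
    calc 5/4*C*(ρ^(α-2)*(‖h‖^3/ρ)) = ρ^(α-2)*(5/4*C*(‖h‖^3/ρ)) := by ring
      _ ≤ ρ^(α-2)*ε^2 := mul_le_mul_of_nonneg_left hin hnn
  -- key first-component bound
  have hkey : C * ‖x - z + h‖^α - C * ρ^α ≤ C*α*ρ^(α-1)*(h i0)
      + C/2*α*(ρ^(α-2)*(‖h‖^2 + (α-2)*(h i0)^2)) + ρ^(α-2)*ε^2 := by
    have step1 : C * ‖x - z + h‖^α ≤ C * (ρ^α * (1 + α*(h i0/ρ) + α/2*(‖h‖/ρ)^2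
        + α*(α-2)/2*(h i0/ρ)^2 + 5/4*(‖h‖/ρ)^3)) := by
      rw [hwha]
      apply mul_le_mul_of_nonneg_left _ hC.le
      exact mul_le_mul_of_nonneg_left hcore (Real.rpow_nonneg hρpos.le α)
    have expand : C * (ρ^α * (1 + α*(h i0/ρ) + α/2*(‖h‖/ρ)^2
        + α*(α-2)/2*(h i0/ρ)^2 + 5/4*(‖h‖/ρ)^3))
        = C*ρ^α + C*α*(ρ^α*(h i0/ρ)) + C*α/2*(ρ^α*(‖h‖/ρ)^2)
          + C*α*(α-2)/2*(ρ^α*(h i0/ρ)^2) + 5/4*C*(ρ^α*(‖h‖/ρ)^3) := by ring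
    rw [expand, e1', e2', e3', e4'] at step1
    linarith only [heps, step1]
  -- quadratic component bound
  have hρ2r : ρ ≤ 2*r := by
    have hx1 : ‖x‖ < r := mem_ball_zero_iff.1 hx
    have hz1 : ‖z‖ < r := mem_ball_zero_iff.1 hz
    calc ρ ≤ ‖x‖ + ‖z‖ := norm_sub_le _ _
      _ ≤ 2*r := by linarith
  have hq2 : Ct*‖k‖^2 ≤ 16*Ct*Lam*r^(2-α)*(ρ^(α-2)*ε^2) := by
    have hk2 : ‖k‖^2 ≤ 4*Lam*ε^2 := by
      have h1 := pow_le_pow_left₀ (norm_nonneg k) hkn 2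
      have h2 : (2*(Real.sqrt Lam * ε))^2 = 4*Real.sqrt Lam^2*ε^2 := by ring
      rw [h2, Real.sq_sqrt hLam.le] at h1
      linarith only [h1]
    have hcmp : ρ^(2-α) ≤ 4*r^(2-α) := by
      have hmono : ρ^(2-α) ≤ (2*r)^(2-α) :=
        Real.rpow_le_rpow hρpos.le hρ2r (by linarith [hα.2])
      have hmul : (2*r)^(2-α) = 2^(2-α)*r^(2-α) := Real.mul_rpow (by norm_num) hr.le
      have hexp : (2:ℝ)^(2-α) ≤ (2:ℝ)^(2:ℝ) :=
        Real.rpow_le_rpow_of_exponent_le one_le_two (by linarith [hα.1])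
      have h4 : (2:ℝ)^(2:ℝ) = 4 := by
        rw [show (2:ℝ) = ((2:ℕ):ℝ) by norm_num, Real.rpow_natCast]
        norm_num
      have hrpow : (0:ℝ) ≤ r^(2-α) := Real.rpow_nonneg hr.le _
      calc ρ^(2-α) ≤ (2*r)^(2-α) := hmono
        _ = 2^(2-α)*r^(2-α) := hmul
        _ ≤ 4*r^(2-α) := mul_le_mul_of_nonneg_right (le_trans hexp (le_of_eq h4)) hrpow
    have hinv : ρ^(α-2) = (ρ^(2-α))⁻¹ := by
      rw [show α-2 = -(2-α) by ring, Real.rpow_neg hρpos.le]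
    have h1 : (1:ℝ) ≤ 4*r^(2-α)*ρ^(α-2) := by
      have hp : (0:ℝ) < ρ^(2-α) := Real.rpow_pos_of_pos hρpos _
      rw [hinv, ← div_eq_mul_inv, le_div_iff₀ hp, one_mul]
      linarith only [hcmp]
    calc Ct*‖k‖^2 ≤ Ct*(4*Lam*ε^2) := mul_le_mul_of_nonneg_left hk2 hCt.le
      _ = (4*Ct*Lam*ε^2)*1 := by ring
      _ ≤ (4*Ct*Lam*ε^2)*(4*r^(2-α)*ρ^(α-2)) := by
          apply mul_le_mul_of_nonneg_left h1 (by positivity)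
      _ = 16*Ct*Lam*r^(2-α)*(ρ^(α-2)*ε^2) := by ring
  -- assemble
  have hrw1 : x + hx' - (z + hz') = x - z + h := by rw [hhdef]; abel
  have hrw2 : x + hx' + (z + hz') = x + z + k := by rw [hkdef]; abel
  have hsum1 : ∑ i, e1 n i * h i = h i0 := sum_e1_mul' i0 rfl h
  have hsum2 : ∑ i, (x + z) i * k i = (inner ℝ (x+z) k : ℝ) := (inner_eq_sum' (x+z) k).symm
  have htr : Matrix.trace (Jmat n α * Matrix.vecMulVec (fun i => h i) (fun i => h i))
      = ‖h‖^2 + (α-2) * (h i0)^2 := trace_J' α i0 rfl h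
  rw [f1, f1, hrw1, hrw2, hsum1, hsum2, htr, norm_add_sq_real (x+z) k]
  linarith only [hkey, hq2]

end
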